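/- Let K, L be bounded convex sets in the plane with nonempty interior, where K has area 1. Let K_n be n points chosen independently and uniformly at random from K. Fix any ε > 0. Then with probability tending to 1 as n → ∞, there is no hole contained in K homothetic to L with area greater than (1+3ε)·log n / n. -/

import Mathlib

open MeasureTheory Filter Set Bornology
open scoped ENNReal

noncomputable section

/-- Rotation of the plane by angle `θ`. -/
def rot (θ : ℝ) (p : ℝ × ℝ) : ℝ × ℝ :=
  (p.1 * Real.cos θ - p.2 * Real.sin θ, p.1 * Real.sin θ + p.2 * Real.cos θ)

/-- A rectangle: the image of an axis-parallel closed rectangle `[0,a] × [0,b]`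
(with `a, b > 0`) under a rigid motion (rotation followed by translation). -/
def IsRectangle (R : Set (ℝ × ℝ)) : Prop :=
  ∃ (θ : ℝ) (c : ℝ × ℝ) (a b : ℝ), 0 < a ∧ 0 < b ∧
    R = (fun p => c + rot θ p) '' (Icc 0 a ×ˢ Icc 0 b)

/-- `S` is a homothetic copy of `L`: `S = x + r • L` for some `x` and ratio `r > 0`. -/
def IsHomothet (L S : Set (ℝ × ℝ)) : Prop :=
  ∃ (x : ℝ × ℝ) (r : ℝ), 0 < r ∧ S = (fun y => x + r • y) '' L

/-- The joint distribution of `n` points chosen independently, each uniformly at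
random from `K` (where `K` has area 1, so the uniform distribution on `K` is the
restriction of Lebesgue measure to `K`). -/
def unifPts (K : Set (ℝ × ℝ)) (n : ℕ) : Measure (Fin n → ℝ × ℝ) :=
  Measure.pi fun _ => volume.restrict K

section Aux

open Pointwise

lemma vol_homothet (A : Set (ℝ×ℝ)) (x : ℝ×ℝ) (r : ℝ) (hr : 0 ≤ r) :
    volume ((fun y => x + r • y) '' A) = ENNReal.ofReal (r^2) * volume A := by
  have h1 : (fun y => x + r • y) '' A = x +ᵥ (r • A) := by
    rw [← Set.image_vadd, ← Set.image_smul, Set.image_image]; simp [vadd_eq_add]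
  rw [h1, measure_vadd, Measure.addHaar_smul]
  congr 2
  rw [abs_of_nonneg (by positivity)]; norm_num

lemma vol_interior (S : Set (ℝ×ℝ)) (hS : Convex ℝ S) : volume (interior S) = volume S := by
  refine le_antisymm (measure_mono interior_subset) ?_
  calc volume S ≤ volume (interior S ∪ frontier S) := by
        refine measure_mono (subset_closure.trans ?_)
        rw [← closure_eq_interior_union_frontier]
    _ ≤ volume (interior S) + volume (frontier S) := measure_union_le _ _
    _ = volume (interior S) := by rw [hS.addHaar_frontier volume, add_zero]

lemma convex_homothet {A : Set (ℝ×ℝ)} (hA : Convex ℝ A) (x : ℝ×ℝ) (r : ℝ) :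
    Convex ℝ ((fun y => x + r • y) '' A) := by
  have h1 : (fun y => x + r • y) '' A = x +ᵥ (r • A) := by
    rw [← Set.image_vadd, ← Set.image_smul, Set.image_image]; simp [vadd_eq_add]
  rw [h1]
  exact (hA.smul r).vadd x

lemma homothet_subset {L : Set (ℝ×ℝ)} (hL : Convex ℝ L) {z : ℝ×ℝ} {ρ : ℝ}
    (hball : Metric.ball z ρ ⊆ L) {x x₂ : ℝ×ℝ} {r r₂ : ℝ} (hr₂ : 0 < r₂) (hrr : r₂ < r)
    (hx₂ : ‖x₂ - (x + (r - r₂) • z)‖ < (r - r₂) * ρ) :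
    (fun y => x₂ + r₂ • y) '' L ⊆ (fun y => x + r • y) '' L := by
  have hr : 0 < r := hr₂.trans hrr
  have hd : 0 < r - r₂ := by linarith
  rintro - ⟨l, hl, rfl⟩
  set w := z + (r - r₂)⁻¹ • (x₂ - x - (r - r₂) • z) with hw
  have hwball : w ∈ Metric.ball z ρ := by
    rw [Metric.mem_ball, dist_eq_norm]
    have h2 : w - z = (r - r₂)⁻¹ • (x₂ - x - (r - r₂) • z) := by rw [hw]; abel
    rw [h2, norm_smul, Real.norm_eq_abs, abs_of_nonneg (by positivity)]
    rw [inv_mul_lt_iff₀ hd]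
    have h3 : x₂ - x - (r - r₂) • z = x₂ - (x + (r - r₂) • z) := by abel
    rw [h3]
    linarith [hx₂]
  have hwL : w ∈ L := hball hwball
  have hcomb : (r₂ / r) • l + (1 - r₂ / r) • w ∈ L := by
    refine hL hl hwL (by positivity) ?_ (by ring)
    have : r₂ / r < 1 := (div_lt_one hr).2 hrr
    linarith
  refine ⟨(r₂ / r) • l + (1 - r₂ / r) • w, hcomb, ?_⟩
  have h4 : 1 - r₂ / r = (r - r₂) / r := by field_simp
  simp only
  rw [smul_add, smul_smul, smul_smul, h4]
  have h5 : r * (r₂ / r) = r₂ := by field_simp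
  have h6 : r * ((r - r₂) / r) = r - r₂ := by field_simp
  rw [h5, h6]
  rw [hw, smul_add, smul_smul, mul_inv_cancel₀ hd.ne', one_smul]
  abel

lemma unifPts_univ (K : Set (ℝ × ℝ)) (hKvol : volume K = 1) (n : ℕ) :
    unifPts K n univ = 1 := by
  rw [unifPts, Measure.pi_univ]
  simp [Measure.restrict_apply_univ, hKvol]

lemma prob_miss (K : Set (ℝ×ℝ)) (hKvol : volume K = 1) (n : ℕ) {U : Set (ℝ×ℝ)}
    (hU : MeasurableSet U) (hUK : U ⊆ K) :
    unifPts K n {ω | ∀ i, ω i ∉ U} = (1 - volume U) ^ n := by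
  have h1 : {ω : Fin n → ℝ×ℝ | ∀ i, ω i ∉ U} = Set.pi univ (fun _ => Uᶜ) := by
    ext ω; simp [Set.mem_pi]
  rw [unifPts, h1, Measure.pi_pi]
  have h3 := measure_inter_add_diff (μ := volume) K hU
  rw [Set.inter_eq_self_of_subset_right hUK, hKvol] at h3
  have h2 : volume.restrict K Uᶜ = 1 - volume U := by
    rw [Measure.restrict_apply hU.compl]
    have h4 : Uᶜ ∩ K = K \ U := by rw [Set.diff_eq_compl_inter]
    rw [h4]
    have hUfin : volume U ≠ ⊤ := by
      intro h; rw [h] at h3; simp at h3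
    exact ENNReal.eq_sub_of_add_eq hUfin (by rw [add_comm]; exact h3)
  simp [h2]

end Aux

set_option maxHeartbeats 2000000 in
/-- Statement (2) in the proof of Theorem 1: for any fixed `ε > 0`, w.h.p. there is
no hole contained in `K` homothetic to `L` with area greater than `(1+3ε) log n / n`. -/
theorem no_large_homothetic_hole (K L : Set (ℝ × ℝ))
    (hKconv : Convex ℝ K) (hKbd : IsBounded K) (hKint : (interior K).Nonempty)
    (hKvol : volume K = 1)
    (hLconv : Convex ℝ L) (hLbd : IsBounded L) (hLint : (interior L).Nonempty)
    (ε : ℝ) (hε : 0 < ε) :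
    Tendsto (fun n : ℕ =>
      unifPts K n {ω : Fin n → ℝ × ℝ |
        ¬ ∃ S : Set (ℝ × ℝ), IsHomothet L S ∧ S ⊆ K ∧ (∀ i, ω i ∉ interior S) ∧
          ENNReal.ofReal ((1 + 3 * ε) * Real.log n / n) < volume S})
      atTop (nhds 1) := by
  classical
  -- basic constants
  obtain ⟨z, hz⟩ := hLint
  obtain ⟨ρ, hρ, hball⟩ := Metric.isOpen_iff.1 isOpen_interior z hz
  have hballL : Metric.ball z ρ ⊆ L := hball.trans interior_subset
  have hzL : z ∈ L := interior_subset hz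
  obtain ⟨D, hD⟩ := hKbd.subset_closedBall 0
  have hD0 : 0 ≤ D := by
    obtain ⟨k₀, hk₀⟩ := hKint
    have := hD (interior_subset hk₀)
    rw [Metric.mem_closedBall] at this
    exact dist_nonneg.trans this
  have hLfin : volume L ≠ ⊤ := hLbd.measure_lt_top.ne
  have hLpos : (0 : ℝ≥0∞) < volume L :=
    lt_of_lt_of_le (Metric.measure_ball_pos _ z hρ) (measure_mono hballL)
  set vL := (volume L).toReal with hvLdef
  have hvL : 0 < vL := ENNReal.toReal_pos hLpos.ne' hLfin
  have hLvol : volume L = ENNReal.ofReal vL := (ENNReal.ofReal_toReal hLfin).symm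
  set η := ε / (4*(1+3*ε)) with hηdef
  have hη : 0 < η := by positivity
  have hη1 : η < 1/2 := by
    rw [hηdef, div_lt_iff₀ (by positivity)]; nlinarith
  have hη4 : 1 + 2*ε ≤ (1-η)^2 * (1+3*ε) := by
    have h1 : 1 - 2*η ≤ (1-η)^2 := by nlinarith
    have h2 : η * (1+3*ε) = ε/4 := by rw [hηdef]; field_simp
    have h3 := mul_le_mul_of_nonneg_right h1 (by positivity : (0:ℝ) ≤ 1+3*ε)
    nlinarith [h2, h3]
  set R0 := Real.sqrt (1/vL) with hR0def
  have hR0 : 0 < R0 := Real.sqrt_pos.2 (by positivity)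
  set M1 := D + R0 * ‖z‖ with hM1def
  have hM1 : 0 ≤ M1 := by positivity
  set C2 := 2*M1/(η*ρ) + 5 with hC2def
  have hC2 : 0 < C2 := by positivity
  set C3 := C2^2 * vL with hC3def
  -- sequences
  set τ : ℕ → ℝ := fun n => (1+3*ε) * Real.log n / n with hτdef
  set r₁ : ℕ → ℝ := fun n => Real.sqrt (τ n / vL) with hr₁def
  set s : ℕ → ℝ := fun n => η * ρ * r₁ n with hsdef
  set N : ℕ → ℤ := fun n => ⌈M1 / s n⌉ + 1 with hNdef
  set B : ℕ → ℝ := fun n => (((2*N n+1).toNat : ℕ) : ℝ)^2 * (1 - (1-η)^2*τ n)^n with hBdef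
  set P : (n : ℕ) → Set (Fin n → ℝ × ℝ) := fun n =>
    {ω : Fin n → ℝ × ℝ | ∃ S : Set (ℝ × ℝ), IsHomothet L S ∧ S ⊆ K ∧
      (∀ i, ω i ∉ interior S) ∧
      ENNReal.ofReal ((1 + 3 * ε) * Real.log n / n) < volume S} with hPdef
  -- the key per-n bound
  have key : ∀ n : ℕ, 3 ≤ n → (1-η)^2 * τ n ≤ 1 → τ n ≤ vL →
      unifPts K n (P n) ≤ ENNReal.ofReal (B n) := by
    intro n hn3 hτ2le hτvL
    have hn1 : (1:ℝ) < n := by exact_mod_cast lt_of_lt_of_le (by norm_num) hn3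
    have hlog : 0 < Real.log n := Real.log_pos hn1
    have hτpos : 0 < τ n := by
      simp only [hτdef]; positivity
    have hr₁pos : 0 < r₁ n := Real.sqrt_pos.2 (by positivity)
    have hr₁sq : r₁ n ^ 2 = τ n / vL := Real.sq_sqrt (by positivity)
    have hspos : 0 < s n := by simp only [hsdef]; positivity
    set r₂ := (1-η) * r₁ n with hr₂def
    have hr₂pos : 0 < r₂ := by rw [hr₂def]; nlinarith
    have hr₂lt : r₂ < r₁ n := by rw [hr₂def]; nlinarith
    set Sst : ℤ → ℤ → Set (ℝ×ℝ) :=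
      fun i j => (fun y => ((i:ℝ) * s n, (j:ℝ) * s n) + r₂ • y) '' L with hSstdef
    set A : ℤ × ℤ → Set (Fin n → ℝ×ℝ) :=
      fun p => {ω | ∀ m, ω m ∉ interior (Sst p.1 p.2)} with hAdef
    set G : Finset (ℤ×ℤ) :=
      (Finset.Icc (-N n) (N n) ×ˢ Finset.Icc (-N n) (N n)).filter
        (fun p => Sst p.1 p.2 ⊆ K) with hGdef
    -- covering step
    have hcov : P n ⊆ ⋃ p ∈ G, A p := by
      intro ω hω
      obtain ⟨S, ⟨x, r, hr, rfl⟩, hSK, havoid, hvol⟩ := hω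
      have hvolS : volume ((fun y => x + r • y) '' L) = ENNReal.ofReal (r^2 * vL) := by
        rw [vol_homothet L x r hr.le, hLvol, ← ENNReal.ofReal_mul (by positivity)]
      have hlt : τ n < r^2 * vL := by
        have h1 : ENNReal.ofReal (τ n) < ENNReal.ofReal (r^2*vL) := by
          rw [← hvolS]; exact hvol
        exact (ENNReal.ofReal_lt_ofReal_iff_of_nonneg hτpos.le).1 h1
      have hrgt : r₁ n < r := by
        simp only [hr₁def]
        refine (Real.sqrt_lt' hr).2 ?_
        rw [div_lt_iff₀ hvL]
        exact hlt
      have hrR0 : r ≤ R0 := by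
        have h1 : volume ((fun y => x + r • y) '' L) ≤ 1 := by
          rw [← hKvol]; exact measure_mono hSK
        rw [hvolS] at h1
        have h2 : r^2 * vL ≤ 1 := by
          have := ENNReal.ofReal_le_one.1 h1
          linarith
        have h3 : r^2 ≤ 1/vL := by
          rw [le_div_iff₀ hvL]; linarith
        calc r = Real.sqrt (r^2) := (Real.sqrt_sq hr.le).symm
          _ ≤ R0 := by rw [hR0def]; exact Real.sqrt_le_sqrt h3
      have hr₂r : r₂ < r := hr₂lt.trans hrgt
      have hdr : η * r₁ n < r - r₂ := by rw [hr₂def]; nlinarith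
      set p : ℝ × ℝ := x + (r - r₂) • z with hpdef
      set i : ℤ := round (p.1 / s n) with hidef
      set j : ℤ := round (p.2 / s n) with hjdef
      have hcoord : ∀ (k : ℤ) (u : ℝ), k = round (u / s n) → |(k:ℝ) * s n - u| ≤ s n / 2 := by
        intro k u hk
        have h1 : (k:ℝ) * s n - u = ((k:ℝ) - u / s n) * s n := by
          field_simp
        rw [h1, abs_mul, abs_of_pos hspos, hk]
        have h2 : |(round (u / s n) : ℝ) - u / s n| ≤ 1/2 := by
          rw [abs_sub_comm]; exact abs_sub_round (u / s n)
        have h3 := mul_le_mul_of_nonneg_right h2 hspos.le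
        linarith
      have hdist : dist (((i:ℝ) * s n, (j:ℝ) * s n) : ℝ × ℝ) p ≤ s n / 2 := by
        rw [Prod.dist_eq]
        refine max_le ?_ ?_ <;> rw [Real.dist_eq]
        · exact hcoord i p.1 hidef
        · exact hcoord j p.2 hjdef
      have hsub : Sst i j ⊆ (fun y => x + r • y) '' L := by
        refine homothet_subset hLconv hballL hr₂pos hr₂r ?_
        have h1 : ‖(((i:ℝ) * s n, (j:ℝ) * s n) : ℝ×ℝ) - (x + (r - r₂) • z)‖
            = dist (((i:ℝ) * s n, (j:ℝ) * s n) : ℝ × ℝ) p := by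
          rw [dist_eq_norm, hpdef]
        rw [h1]
        have h2 : s n < (r - r₂) * ρ := by
          have : η * ρ * r₁ n < (r - r₂) * ρ := by nlinarith
          simp only [hsdef]; exact this
        linarith [hdist]
      -- index bounds
      have hxz : ‖x + r • z‖ ≤ D := by
        have h1 : x + r • z ∈ K := hSK ⟨z, hzL, rfl⟩
        have := hD h1
        rwa [Metric.mem_closedBall, dist_zero_right] at this
      have hpnorm : ‖p‖ ≤ M1 := by
        have h1 : p = (x + r • z) - r₂ • z := by
          rw [hpdef, sub_smul]; abel
        rw [h1]
        calc ‖(x + r • z) - r₂ • z‖ ≤ ‖x + r • z‖ + ‖r₂ • z‖ := norm_sub_le _ _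
          _ ≤ D + R0 * ‖z‖ := by
              refine add_le_add hxz ?_
              rw [norm_smul, Real.norm_eq_abs, abs_of_pos hr₂pos]
              exact mul_le_mul_of_nonneg_right (by linarith) (norm_nonneg z)
          _ = M1 := hM1def.symm
      have hidx : ∀ (k : ℤ) (u : ℝ), k = round (u / s n) → |u| ≤ M1 → |k| ≤ N n := by
        intro k u hk hu
        have h1 : |(k:ℝ)| ≤ |u / s n| + 1/2 := by
          have h2 : |(round (u / s n) : ℝ) - u / s n| ≤ 1/2 := by
            rw [abs_sub_comm]; exact abs_sub_round (u / s n)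
          rw [hk]
          calc |(round (u / s n) : ℝ)|
              = |((round (u / s n) : ℝ) - u / s n) + u / s n| := by ring_nf
            _ ≤ |(round (u / s n) : ℝ) - u / s n| + |u / s n| := abs_add_le _ _
            _ ≤ |u / s n| + 1/2 := by linarith
        have h3 : |u / s n| ≤ M1 / s n := by
          rw [abs_div, abs_of_pos hspos]
          exact (div_le_div_iff_of_pos_right hspos).2 hu
        have h4 : ((|k| : ℤ) : ℝ) ≤ ((N n : ℤ) : ℝ) := by
          rw [Int.cast_abs]
          have h5 : M1 / s n ≤ (⌈M1 / s n⌉ : ℝ) := Int.le_ceil _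
          have h6 : ((N n : ℤ) : ℝ) = (⌈M1 / s n⌉ : ℝ) + 1 := by
            simp only [hNdef]; push_cast; ring
          rw [h6]
          linarith
        exact_mod_cast h4
      have hp1 : |p.1| ≤ M1 := by
        rw [← Real.norm_eq_abs]
        exact (norm_fst_le p).trans hpnorm
      have hp2 : |p.2| ≤ M1 := by
        rw [← Real.norm_eq_abs]
        exact (norm_snd_le p).trans hpnorm
      have hmem : (i, j) ∈ G := by
        simp only [hGdef]; rw [ Finset.mem_filter]
        constructor
        · rw [Finset.mem_product]
          constructor <;> rw [Finset.mem_Icc] <;> rw [← abs_le]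
          · exact hidx i p.1 hidef hp1
          · exact hidx j p.2 hjdef hp2
        · exact hsub.trans hSK
      refine Set.mem_iUnion₂.2 ⟨(i, j), hmem, ?_⟩
      intro m hm
      exact havoid m (interior_mono hsub hm)
    -- probability of each elementary event
    have hτ₂0 : 0 ≤ (1-η)^2 * τ n := by positivity
    have hterm : ∀ pr ∈ G, unifPts K n (A pr) ≤
        ((1:ℝ≥0∞) - ENNReal.ofReal ((1-η)^2 * τ n))^n := by
      intro pr hpr
      obtain ⟨-, hPK⟩ := Finset.mem_filter.1 hpr
      have hU : MeasurableSet (interior (Sst pr.1 pr.2)) := isOpen_interior.measurableSet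
      have hUK : interior (Sst pr.1 pr.2) ⊆ K := interior_subset.trans hPK
      have heq : unifPts K n (A pr) = ((1:ℝ≥0∞) - volume (interior (Sst pr.1 pr.2)))^n :=
        prob_miss K hKvol n hU hUK
      have hvolint : volume (interior (Sst pr.1 pr.2)) = ENNReal.ofReal ((1-η)^2 * τ n) := by
        simp only [hSstdef]
        rw [vol_interior _ (convex_homothet hLconv _ _), vol_homothet L _ _ hr₂pos.le, hLvol,
          ← ENNReal.ofReal_mul (by positivity)]
        congr 1
        rw [hr₂def, mul_pow, hr₁sq]
        field_simp
      rw [heq, hvolint]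
    have hchain : unifPts K n (P n) ≤
        (G.card : ℝ≥0∞) * ((1:ℝ≥0∞) - ENNReal.ofReal ((1-η)^2*τ n))^n := by
      calc unifPts K n (P n) ≤ unifPts K n (⋃ p ∈ G, A p) := measure_mono hcov
        _ ≤ ∑ p ∈ G, unifPts K n (A p) := measure_biUnion_finset_le G A
        _ ≤ ∑ _p ∈ G, ((1:ℝ≥0∞) - ENNReal.ofReal ((1-η)^2*τ n))^n := Finset.sum_le_sum hterm
        _ = (G.card : ℝ≥0∞) * _ := by rw [Finset.sum_const, nsmul_eq_mul]
    have hcard : G.card ≤ ((2*N n+1).toNat)^2 := by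
      calc G.card ≤ ((Finset.Icc (-N n) (N n)) ×ˢ (Finset.Icc (-N n) (N n))).card :=
            Finset.card_filter_le _ _
        _ = (Finset.Icc (-N n) (N n)).card^2 := by rw [Finset.card_product]; ring
        _ = ((2*N n+1).toNat)^2 := by
            rw [Int.card_Icc]
            have : N n + 1 - -N n = 2*N n + 1 := by ring
            rw [this]
    have h1m : (1 : ℝ≥0∞) - ENNReal.ofReal ((1-η)^2*τ n)
        = ENNReal.ofReal (1 - (1-η)^2*τ n) := by
      rw [ENNReal.ofReal_sub _ hτ₂0, ENNReal.ofReal_one]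
    have hfinal : unifPts K n (P n) ≤
        (((2*N n+1).toNat^2 : ℕ) : ℝ≥0∞) * ENNReal.ofReal ((1 - (1-η)^2*τ n)^n) := by
      rw [ENNReal.ofReal_pow (by linarith), ← h1m]
      refine hchain.trans (mul_le_mul_left ?_ _)
      exact_mod_cast hcard
    refine hfinal.trans (le_of_eq ?_)
    simp only [hBdef]
    have hc : ((((2*N n+1).toNat : ℕ) : ℝ))^2 = (((2*N n+1).toNat^2 : ℕ) : ℝ) := by
      push_cast; ring
    rw [hc, ENNReal.ofReal_mul (by positivity), ENNReal.ofReal_natCast]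
  -- limits
  have hτ0 : Tendsto τ atTop (nhds 0) := by
    have h1 : Tendsto (fun x : ℝ => Real.log x / x) atTop (nhds 0) :=
      Real.isLittleO_log_id_atTop.tendsto_div_nhds_zero
    have h2 : Tendsto (fun n : ℕ => Real.log n / n) atTop (nhds 0) :=
      h1.comp tendsto_natCast_atTop_atTop
    have h3 := h2.const_mul (1+3*ε)
    rw [mul_zero] at h3
    have h4 : τ = fun n : ℕ => (1+3*ε) * (Real.log n / n) := by
      funext m; simp only [hτdef]; ring
    rw [h4]
    exact h3
  have hev1 : ∀ᶠ n : ℕ in atTop, (1-η)^2 * τ n ≤ 1 := by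
    have h0 : Tendsto (fun n => (1-η)^2 * τ n) atTop (nhds 0) := by
      simpa using hτ0.const_mul ((1-η)^2)
    exact h0.eventually_le_const (by norm_num)
  have hev2 : ∀ᶠ n : ℕ in atTop, τ n ≤ vL := hτ0.eventually_le_const hvL
  have hev3 : ∀ᶠ n : ℕ in atTop, τ n ≤ 1 :=
    hτ0.eventually_le_const (by norm_num)
  -- real-valued bound on B
  have hBle : ∀ᶠ n : ℕ in atTop, B n ≤ C3 * (n:ℝ)^(-(2*ε)) := by
    filter_upwards [eventually_ge_atTop 3, hev1, hev2] with n hn3 hτ2le hτvL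
    have hn0 : (0:ℝ) < n := by exact_mod_cast (by omega : 0 < n)
    have hn1 : (1:ℝ) < n := by exact_mod_cast (by omega : 1 < n)
    have hlog : 0 < Real.log n := Real.log_pos hn1
    have hlog1 : 1 ≤ Real.log n := by
      have he3 : Real.exp 1 ≤ 3 := by
        have := Real.exp_one_lt_d9
        linarith
      have h3n : (3:ℝ) ≤ n := by exact_mod_cast hn3
      calc (1:ℝ) = Real.log (Real.exp 1) := (Real.log_exp 1).symm
        _ ≤ Real.log n := Real.log_le_log (Real.exp_pos 1) (he3.trans h3n)
    have hτpos : 0 < τ n := by simp only [hτdef]; positivity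
    have hr₁pos : 0 < r₁ n := Real.sqrt_pos.2 (by positivity)
    have hr₁sq : r₁ n ^ 2 = τ n / vL := Real.sq_sqrt (by positivity)
    have hspos : 0 < s n := by simp only [hsdef]; positivity
    have hr₁le1 : r₁ n ≤ 1 := by
      simp only [hr₁def]
      rw [Real.sqrt_le_one]
      rw [div_le_one hvL]
      exact hτvL
    have hτn : (n:ℝ) * τ n = (1+3*ε) * Real.log n := by
      simp only [hτdef]; field_simp
    -- cardinality factor
    have hNnn : 0 ≤ 2*N n+1 := by
      have : (0:ℤ) ≤ ⌈M1 / s n⌉ := Int.ceil_nonneg (by positivity)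
      simp only [hNdef]; omega
    have hNb : (((2*N n+1).toNat : ℕ):ℝ) ≤ C2 / r₁ n := by
      have hcast : (((2*N n+1).toNat : ℕ):ℝ) = 2*((N n : ℤ):ℝ)+1 := by
        rw [← Int.cast_natCast, Int.toNat_of_nonneg hNnn]
        push_cast; ring
      have hceil : (⌈M1 / s n⌉ : ℝ) < M1 / s n + 1 := Int.ceil_lt_add_one _
      have hN : ((N n : ℤ):ℝ) = (⌈M1 / s n⌉ : ℝ) + 1 := by simp only [hNdef]; push_cast; ring
      have hms : M1 / s n = (2*M1/(η*ρ)) / (2 * r₁ n) := by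
        simp only [hsdef]; field_simp
      have h5r : (5:ℝ) ≤ 5 / r₁ n := by
        rw [le_div_iff₀ hr₁pos]; nlinarith
      have hsplit : C2 / r₁ n = (2*M1/(η*ρ)) / r₁ n + 5 / r₁ n := by
        rw [hC2def, add_div]
      rw [hcast, hN, hsplit]
      have : (2*M1/(η*ρ)) / (2 * r₁ n) * 2 = (2*M1/(η*ρ)) / r₁ n := by
        field_simp
      nlinarith [hceil, hms, h5r, this]
    have hBfirst : ((((2*N n+1).toNat : ℕ):ℝ))^2 ≤ C2^2/(r₁ n)^2 := by
      have := pow_le_pow_left₀ (by positivity) hNb 2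
      rwa [div_pow] at this
    have hfirst' : C2^2/(r₁ n)^2 ≤ C3 * n := by
      rw [hr₁sq]
      have heq1 : C2^2/(τ n / vL) = C2^2 * vL / τ n := by field_simp
      rw [heq1, hC3def, div_le_iff₀ hτpos]
      have h6 : 1 ≤ (1+3*ε) * Real.log n := by nlinarith
      have h7 : C2^2*vL ≤ C2^2*vL*((1+3*ε)*Real.log n) := by
        have h7a := mul_le_mul_of_nonneg_left h6 (by positivity : (0:ℝ) ≤ C2^2*vL)
        linarith
      calc C2^2*vL ≤ C2^2*vL*((n:ℝ) * τ n) := by rw [hτn]; exact h7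
        _ = C2 ^ 2 * vL * ↑n * τ n := by ring
    -- exponential factor
    have ha : (0:ℝ) ≤ 1 - (1-η)^2*τ n := by linarith
    have hb : 1 - (1-η)^2*τ n ≤ Real.exp (-((1-η)^2*τ n)) := by
      linarith [Real.add_one_le_exp (-((1-η)^2*τ n))]
    have hsecond : (1 - (1-η)^2*τ n)^n ≤ (n:ℝ)^(-(1+2*ε)) := by
      have hc2 : (1 - (1-η)^2*τ n)^n ≤ Real.exp (-((1-η)^2*τ n))^n :=
        pow_le_pow_left₀ ha hb n
      have hd2 : Real.exp (-((1-η)^2*τ n))^n = Real.exp ((n:ℝ) * -((1-η)^2*τ n)) :=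
        (Real.exp_nat_mul _ n).symm
      have he2 : (n:ℝ) * -((1-η)^2*τ n) ≤ -((1+2*ε)*Real.log n) := by
        have h8 : (n:ℝ) * ((1-η)^2*τ n) = (1-η)^2*((1+3*ε)*Real.log n) := by
          rw [← hτn]; ring
        have h9 := mul_le_mul_of_nonneg_right hη4 hlog.le
        have h10 : (1+2*ε)*Real.log n ≤ (1-η)^2*((1+3*ε)*Real.log n) := by
          calc (1+2*ε)*Real.log n ≤ ((1-η)^2*(1+3*ε))*Real.log n := h9
            _ = (1-η)^2*((1+3*ε)*Real.log n) := by ring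
        linarith [h8, h10]
      have hf2 : (n:ℝ)^(-(1+2*ε)) = Real.exp (-((1+2*ε)*Real.log n)) := by
        rw [Real.rpow_def_of_pos hn0]
        congr 1; ring
      calc (1 - (1-η)^2*τ n)^n ≤ Real.exp ((n:ℝ) * -((1-η)^2*τ n)) := by rw [← hd2]; exact hc2
        _ ≤ Real.exp (-((1+2*ε)*Real.log n)) := Real.exp_le_exp.2 he2
        _ = (n:ℝ)^(-(1+2*ε)) := hf2.symm
    have hcomb : B n ≤ (C3 * n) * (n:ℝ)^(-(1+2*ε)) := by
      simp only [hBdef]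
      exact mul_le_mul (hBfirst.trans hfirst') hsecond (pow_nonneg ha n)
        (by positivity)
    calc B n ≤ (C3 * n) * (n:ℝ)^(-(1+2*ε)) := hcomb
      _ = C3 * ((n:ℝ)^(1:ℝ) * (n:ℝ)^(-(1+2*ε))) := by rw [Real.rpow_one]; ring
      _ = C3 * (n:ℝ)^(-(2*ε)) := by
          rw [← Real.rpow_add hn0]
          congr 1
          ring
  have hB0 : ∀ᶠ n : ℕ in atTop, 0 ≤ B n := by
    filter_upwards [hev1] with n h
    simp only [hBdef]
    exact mul_nonneg (by positivity) (pow_nonneg (by linarith) n)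
  have hBlim : Tendsto B atTop (nhds 0) := by
    refine squeeze_zero' hB0 hBle ?_
    have h1 : Tendsto (fun x : ℝ => x ^ (-(2*ε))) atTop (nhds 0) :=
      tendsto_rpow_neg_atTop (by positivity)
    have h2 := (h1.comp tendsto_natCast_atTop_atTop).const_mul C3
    rw [mul_zero] at h2
    exact h2
  -- assemble
  have hbound : ∀ᶠ n in atTop, unifPts K n (P n) ≤ ENNReal.ofReal (B n) := by
    filter_upwards [eventually_ge_atTop 3, hev1, hev2] with n h3 h1 h2
    exact key n h3 h1 h2
  have hPlim : Tendsto (fun n => unifPts K n (P n)) atTop (nhds 0) := by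
    refine tendsto_of_tendsto_of_tendsto_of_le_of_le' tendsto_const_nhds ?_
      (Eventually.of_forall fun n => zero_le) hbound
    have h1 := (ENNReal.continuous_ofReal.tendsto 0).comp hBlim
    simpa [Function.comp_def] using h1
  have hupper : ∀ n, unifPts K n (P n)ᶜ ≤ 1 := by
    intro n
    rw [← unifPts_univ K hKvol n]
    exact measure_mono (subset_univ _)
  have hlower : ∀ n, 1 - unifPts K n (P n) ≤ unifPts K n (P n)ᶜ := by
    intro n
    rw [tsub_le_iff_right]
    calc (1:ℝ≥0∞) = unifPts K n univ := (unifPts_univ K hKvol n).symm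
      _ = unifPts K n ((P n)ᶜ ∪ P n) := by rw [compl_union_self]
      _ ≤ _ := measure_union_le _ _
  have hlim1 : Tendsto (fun n => 1 - unifPts K n (P n)) atTop (nhds 1) := by
    have h1 := ENNReal.Tendsto.sub
      (tendsto_const_nhds : Tendsto (fun _ : ℕ => (1:ℝ≥0∞)) atTop (nhds 1)) hPlim
      (Or.inl (by norm_num))
    simpa using h1
  have hsets : ∀ n : ℕ, {ω : Fin n → ℝ × ℝ |
      ¬ ∃ S : Set (ℝ × ℝ), IsHomothet L S ∧ S ⊆ K ∧ (∀ i, ω i ∉ interior S) ∧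
        ENNReal.ofReal ((1 + 3 * ε) * Real.log n / n) < volume S} = (P n)ᶜ := by
    intro n
    simp only [hPdef, Set.compl_setOf]
  refine tendsto_of_tendsto_of_tendsto_of_le_of_le hlim1 tendsto_const_nhds ?_ ?_ <;>
    intro n <;> beta_reduce <;> rw [hsets n]
  · exact hlower n
  · exact hupper n
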